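/- Let n ≥ 2, f a Schwartz function on ℝ^{1+n}, and θ ∈ S^{n-1}. Then the Fourier transform in the variable z of Lf(·,θ) satisfies, for every ξ ∈ ℝ^n: ∫_{ℝ^n} e^{-i z·ξ} Lf(z,θ) dz = f̂(-θ·ξ, ξ). In particular, the restriction of Lf to each direction θ determines the Fourier transform of f on the hyperplane { (τ,ξ) : τ = -θ·ξ }, which consists of covectors (τ,ξ) with |τ| ≤ |ξ|. -/

import Mathlib

open MeasureTheory Complex

/-- Fourier slice theorem for the Minkowski light ray transform: for a
Schwartz function `f` on `ℝ^{1+n}` and `θ ∈ S^{n-1}`, the Fourier transform in `z` of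
`Lf(·,θ)` satisfies `∫_{ℝ^n} e^{-i z·ξ} Lf(z,θ) dz = f̂(-θ·ξ, ξ)` for every `ξ`, where
`f̂(τ,ξ) = ∫ e^{-i(tτ + x·ξ)} f(t,x) dt dx`; moreover the covectors `(-θ·ξ, ξ)` so obtained
satisfy `|τ| ≤ |ξ|`. -/
theorem light_ray_transform_fourier_slice
    (n : ℕ) (hn : 2 ≤ n)
    (f : SchwartzMap (ℝ × EuclideanSpace ℝ (Fin n)) ℂ)
    (θ : EuclideanSpace ℝ (Fin n)) (hθ : ‖θ‖ = 1) :
    (∀ ξ : EuclideanSpace ℝ (Fin n),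
      (∫ z : EuclideanSpace ℝ (Fin n),
          Complex.exp (-(Complex.I * ((inner ℝ z ξ : ℝ) : ℂ)))
            * ∫ s : ℝ, f (s, z + s • θ))
        = ∫ p : ℝ × EuclideanSpace ℝ (Fin n),
            Complex.exp (-(Complex.I * ((p.1 * (-(inner ℝ θ ξ : ℝ)) + (inner ℝ p.2 ξ : ℝ) : ℝ) : ℂ)))
              * f p) ∧
    (∀ ξ : EuclideanSpace ℝ (Fin n), |(-(inner ℝ θ ξ : ℝ))| ≤ ‖ξ‖) := by
  have haar : (volume : Measure (ℝ × EuclideanSpace ℝ (Fin n))).IsAddHaarMeasure := by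
    rw [Measure.volume_eq_prod]; infer_instance
  constructor
  · intro ξ
    -- the shear is measure preserving
    have hT : MeasurePreserving
        (fun p : ℝ × EuclideanSpace ℝ (Fin n) => (p.1, p.2 + p.1 • θ))
        ((volume : Measure ℝ).prod (volume : Measure (EuclideanSpace ℝ (Fin n))))
        ((volume : Measure ℝ).prod (volume : Measure (EuclideanSpace ℝ (Fin n)))) := by
      refine MeasurePreserving.skew_product
        (g := fun (s : ℝ) (z : EuclideanSpace ℝ (Fin n)) => z + s • θ)
        (MeasurePreserving.id volume)
        (measurable_snd.add (measurable_fst.smul_const θ)) (ae_of_all _ fun s => ?_)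
      exact (measurePreserving_add_right volume (s • θ)).map_eq
    have hfint' : Integrable (fun p : ℝ × EuclideanSpace ℝ (Fin n) => f p)
        ((volume : Measure ℝ).prod (volume : Measure (EuclideanSpace ℝ (Fin n)))) := by
      rw [← Measure.volume_eq_prod]; exact f.integrable
    -- integrability of the sheared f
    have hcomp : Integrable (fun p : ℝ × EuclideanSpace ℝ (Fin n) => f (p.1, p.2 + p.1 • θ))
        ((volume : Measure ℝ).prod (volume : Measure (EuclideanSpace ℝ (Fin n)))) :=
      (hT.integrable_comp hfint'.aestronglyMeasurable).2 hfint'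
    -- the oscillating factor has norm one
    have hexp_norm : ∀ r : ℝ, ‖Complex.exp (-(Complex.I * (r : ℂ)))‖ = 1 := by
      intro r
      rw [Complex.norm_exp]
      simp
    have hc0 : Continuous fun z : EuclideanSpace ℝ (Fin n) =>
        Complex.exp (-(Complex.I * ((inner ℝ z ξ : ℝ) : ℂ))) :=
      Complex.continuous_exp.comp
        ((continuous_const.mul (Complex.continuous_ofReal.comp
          (continuous_id.inner continuous_const))).neg)
    -- integrand on the right side
    have hg : Integrable (fun p : ℝ × EuclideanSpace ℝ (Fin n) =>
        Complex.exp (-(Complex.I * ((p.1 * (-(inner ℝ θ ξ : ℝ)) + (inner ℝ p.2 ξ : ℝ) : ℝ) : ℂ))) * f p)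
        ((volume : Measure ℝ).prod (volume : Measure (EuclideanSpace ℝ (Fin n)))) := by
      refine hfint'.bdd_mul ?_ (ae_of_all _ fun p => le_of_eq (hexp_norm _))
      refine Continuous.aestronglyMeasurable ?_
      exact Complex.continuous_exp.comp
        ((continuous_const.mul (Complex.continuous_ofReal.comp
          ((continuous_fst.mul continuous_const).add
            (continuous_snd.inner continuous_const)))).neg)
    -- integrand for the swapped double integral
    have hh : Integrable (fun p : ℝ × EuclideanSpace ℝ (Fin n) =>
        Complex.exp (-(Complex.I * ((inner ℝ p.2 ξ : ℝ) : ℂ))) * f (p.1, p.2 + p.1 • θ))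
        ((volume : Measure ℝ).prod (volume : Measure (EuclideanSpace ℝ (Fin n)))) := by
      refine hcomp.bdd_mul ?_ (ae_of_all _ fun p => le_of_eq (hexp_norm _))
      exact (hc0.comp continuous_snd).aestronglyMeasurable
    calc (∫ z : EuclideanSpace ℝ (Fin n),
          Complex.exp (-(Complex.I * ((inner ℝ z ξ : ℝ) : ℂ))) * ∫ s : ℝ, f (s, z + s • θ))
        = ∫ z : EuclideanSpace ℝ (Fin n), ∫ s : ℝ,
            Complex.exp (-(Complex.I * ((inner ℝ z ξ : ℝ) : ℂ))) * f (s, z + s • θ) := by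
          simp_rw [integral_const_mul]
      _ = ∫ s : ℝ, ∫ z : EuclideanSpace ℝ (Fin n),
            Complex.exp (-(Complex.I * ((inner ℝ z ξ : ℝ) : ℂ))) * f (s, z + s • θ) := by
          exact integral_integral_swap hh.swap
      _ = ∫ s : ℝ, ∫ x : EuclideanSpace ℝ (Fin n),
            Complex.exp (-(Complex.I * ((s * (-(inner ℝ θ ξ : ℝ)) + (inner ℝ x ξ : ℝ) : ℝ) : ℂ))) * f (s, x) := by
          refine integral_congr_ae (ae_of_all _ fun s => ?_)
          dsimp only
          rw [← integral_add_right_eq_self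
            (fun x : EuclideanSpace ℝ (Fin n) =>
              Complex.exp (-(Complex.I * ((s * (-(inner ℝ θ ξ : ℝ)) + (inner ℝ x ξ : ℝ) : ℝ) : ℂ))) * f (s, x))
            (s • θ)]
          refine integral_congr_ae (ae_of_all _ fun z => ?_)
          dsimp only
          have h1 : (inner ℝ (z + s • θ) ξ : ℝ) = inner ℝ z ξ + s * inner ℝ θ ξ := by
            rw [inner_add_left, real_inner_smul_left]
          rw [h1]
          congr 2
          push_cast
          ring
      _ = ∫ p : ℝ × EuclideanSpace ℝ (Fin n),
            Complex.exp (-(Complex.I * ((p.1 * (-(inner ℝ θ ξ : ℝ)) + (inner ℝ p.2 ξ : ℝ) : ℝ) : ℂ))) * f p := by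
          rw [Measure.volume_eq_prod, integral_prod _ hg]
  · intro ξ
    rw [abs_neg]
    calc |(inner ℝ θ ξ : ℝ)| ≤ ‖θ‖ * ‖ξ‖ := abs_real_inner_le_norm θ ξ
      _ = ‖ξ‖ := by rw [hθ, one_mul]
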